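/- Let n ≥ 2 and let W be a real vector space of dimension 2n+1. Let η ∈ W* and ξ ∈ W with η(ξ) = 1, and let Φ be an alternating 2-form on W with Φ(ξ, ·) = 0 whose restriction to the hyperplane ker η is nondegenerate. If β ∈ W* satisfies β(ξ) = 0 and β ∧ η ∧ Φ = 0 (as an alternating 4-form on W), then β = 0. -/

import Mathlib

open scoped TensorProduct

/-- Wedge product of real-valued alternating forms (shuffle/determinant convention). -/
noncomputable def wedge {V : Type*} [AddCommGroup V] [Module ℝ V] {k l : ℕ}
    (α : V [⋀^Fin k]→ₗ[ℝ] ℝ) (β : V [⋀^Fin l]→ₗ[ℝ] ℝ) :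
    V [⋀^Fin (k + l)]→ₗ[ℝ] ℝ :=
  AlternatingMap.domDomCongr finSumFinEquiv
    ((TensorProduct.lid ℝ ℝ).toLinearMap.compAlternatingMap (α.domCoprod β))

/-- A linear functional regarded as an alternating `1`-form. -/
noncomputable def oneForm {V : Type*} [AddCommGroup V] [Module ℝ V]
    (α : V →ₗ[ℝ] ℝ) : V [⋀^Fin 1]→ₗ[ℝ] ℝ :=
  AlternatingMap.ofSubsingleton ℝ V ℝ 0 α

/-- Cast a `k`-form along an equality of degrees. -/
def castForm {V : Type*} [AddCommGroup V] [Module ℝ V] {k l : ℕ} (h : k = l)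
    (θ : V [⋀^Fin k]→ₗ[ℝ] ℝ) : V [⋀^Fin l]→ₗ[ℝ] ℝ :=
  AlternatingMap.domDomCongr (finCongr h) θ

/-- The `n`-th wedge power of an alternating `2`-form. -/
noncomputable def wpow {V : Type*} [AddCommGroup V] [Module ℝ V]
    (Ω : V [⋀^Fin 2]→ₗ[ℝ] ℝ) : (n : ℕ) → V [⋀^Fin (2 * n)]→ₗ[ℝ] ℝ
  | 0 => castForm (by omega) (AlternatingMap.constOfIsEmpty ℝ V (Fin 0) (1 : ℝ))
  | n + 1 => castForm (by omega) (wedge Ω (wpow Ω n))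


open Equiv

lemma wedge_one_apply {V : Type*} [AddCommGroup V] [Module ℝ V] {m : ℕ}
    (a : V →ₗ[ℝ] ℝ) (θ : V [⋀^Fin m]→ₗ[ℝ] ℝ) (v : Fin (m + 1) → V) :
    wedge (oneForm a) θ (fun i => v (Fin.cast (by omega) i)) =
      ∑ p : Fin (m + 1), (if p = 0 then (1 : ℝ) else -1) *
        (a (v p) * θ (fun j => v (Equiv.swap 0 p j.succ))) := by
  have hfac : (m.factorial : ℝ) ≠ 0 := by exact_mod_cast m.factorial_ne_zero
  apply mul_left_cancel₀ hfac
  set L : ℝ ⊗[ℝ] ℝ →ₗ[ℝ] ℝ := (TensorProduct.lid ℝ ℝ).toLinearMap with hL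
  set u : Fin 1 ⊕ Fin m → V := fun s => v (Fin.cast (add_comm 1 m) (finSumFinEquiv s)) with hu
  have step1 : wedge (oneForm a) θ (fun i => v (Fin.cast (by omega) i)) =
      L (((oneForm a).domCoprod θ) u) := rfl
  rw [step1]
  have h2 := MultilinearMap.domCoprod_alternization_eq (oneForm a) θ
  have h2u : (MultilinearMap.alternatization
      (MultilinearMap.domCoprod (oneForm a) θ : MultilinearMap ℝ (fun _ : Fin 1 ⊕ Fin m => V) (ℝ ⊗[ℝ] ℝ))) u
      = m.factorial • (((oneForm a).domCoprod θ) u) := by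
    rw [h2]; simp
  have step2 : (m.factorial : ℝ) * L (((oneForm a).domCoprod θ) u)
      = L ((MultilinearMap.alternatization
          (MultilinearMap.domCoprod (oneForm a) θ : MultilinearMap ℝ (fun _ : Fin 1 ⊕ Fin m => V) (ℝ ⊗[ℝ] ℝ))) u) := by
    rw [← Nat.cast_smul_eq_nsmul ℝ] at h2u
    rw [h2u, map_smul, smul_eq_mul]
  rw [step2, MultilinearMap.alternatization_apply, map_sum]
  set E : Fin 1 ⊕ Fin m ≃ Fin (m+1) := finSumFinEquiv.trans (finCongr (add_comm 1 m)) with hE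
  have hE0 : E (Sum.inl 0) = 0 := by ext; simp [hE]
  have hEr : ∀ j : Fin m, E (Sum.inr j) = j.succ := by
    intro j; ext; simp [hE, add_comm]
  have step3 : ∑ σ : Perm (Fin 1 ⊕ Fin m),
      L (Equiv.Perm.sign σ • ((MultilinearMap.domCoprod (oneForm a) θ
        : MultilinearMap ℝ (fun _ : Fin 1 ⊕ Fin m => V) (ℝ ⊗[ℝ] ℝ)).domDomCongr σ) u)
      = ∑ τ : Perm (Fin (m+1)),
        (Equiv.Perm.sign τ : ℤ) • (a (v (τ 0)) * θ (fun j => v (τ j.succ))) := by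
    refine Fintype.sum_equiv (Equiv.permCongr E) _ _ ?_
    intro σ
    have hsymm : ∀ j : Fin m, E.symm (j.succ) = Sum.inr j := fun j => by
      rw [← hEr j, Equiv.symm_apply_apply]
    have hsymm0 : E.symm 0 = Sum.inl 0 := by rw [← hE0, Equiv.symm_apply_apply]
    rw [Equiv.Perm.sign_permCongr]
    simp only [MultilinearMap.domDomCongr_apply,
      MultilinearMap.domCoprod_apply, Units.smul_def, map_zsmul, hL,
      LinearEquiv.coe_coe, TensorProduct.lid_tmul, smul_eq_mul,
      Equiv.permCongr_apply, hsymm, hsymm0, oneForm,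
      AlternatingMap.coe_multilinearMap, AlternatingMap.ofSubsingleton, MultilinearMap.ofSubsingleton_apply_apply]
    rfl
  rw [step3]
  have inner : ∀ (w : Fin m → V), ∑ e : Perm (Fin m),
      (Equiv.Perm.sign e : ℤ) • θ (fun j => w (e j)) = (m.factorial : ℝ) * θ w := by
    intro w
    have h := AlternatingMap.coe_alternatization (θ : V [⋀^Fin m]→ₗ[ℝ] ℝ)
    have h2 : (MultilinearMap.alternatization (θ : MultilinearMap ℝ (fun _ : Fin m => V) ℝ)) w
        = ((Fintype.card (Fin m)).factorial • θ) w := by rw [h]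
    rw [MultilinearMap.alternatization_apply] at h2
    simp only [Fintype.card_fin, AlternatingMap.smul_apply, nsmul_eq_mul] at h2
    rw [← h2]
    rfl
  have step4 : ∑ τ : Perm (Fin (m+1)),
      (Equiv.Perm.sign τ : ℤ) • (a (v (τ 0)) * θ (fun j => v (τ j.succ)))
      = ∑ pe : Fin (m+1) × Perm (Fin m),
        (Equiv.Perm.sign (Equiv.Perm.decomposeFin.symm pe) : ℤ) •
          (a (v (Equiv.Perm.decomposeFin.symm pe 0)) *
            θ (fun j => v (Equiv.Perm.decomposeFin.symm pe j.succ))) := by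
    refine Fintype.sum_equiv Equiv.Perm.decomposeFin _ _ ?_
    intro τ
    rw [Equiv.symm_apply_apply]
  rw [step4, Fintype.sum_prod_type, Finset.mul_sum]
  refine Finset.sum_congr rfl (fun p _ => ?_)
  calc ∑ e : Perm (Fin m), (Equiv.Perm.sign (Equiv.Perm.decomposeFin.symm (p, e)) : ℤ) •
          (a (v (Equiv.Perm.decomposeFin.symm (p, e) 0)) *
            θ (fun j => v (Equiv.Perm.decomposeFin.symm (p, e) j.succ)))
      = ∑ e : Perm (Fin m), (if p = 0 then (1:ℝ) else -1) *
          (a (v p) * ((Equiv.Perm.sign e : ℤ) • θ (fun j => v (Equiv.swap 0 p ((e j).succ))))) := by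
        refine Finset.sum_congr rfl (fun e _ => ?_)
        simp only [Equiv.Perm.decomposeFin_symm_apply_zero,
          Equiv.Perm.decomposeFin_symm_apply_succ, Equiv.Perm.decomposeFin.symm_sign,
          Units.val_mul, Int.cast_mul, zsmul_eq_mul, apply_ite (fun z : ℤˣ => (z : ℤ)),
          apply_ite (fun z : ℤ => (z : ℝ)), Units.val_one, Units.val_neg, Int.cast_one,
          Int.cast_neg]
        ring
    _ = (if p = 0 then (1:ℝ) else -1) * (a (v p) *
          ((m.factorial : ℝ) * θ (fun j => v (Equiv.swap 0 p j.succ)))) := by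
        rw [← Finset.mul_sum, ← Finset.mul_sum, inner (fun j => v (Equiv.swap 0 p j.succ))]
    _ = (m.factorial : ℝ) * ((if p = 0 then (1:ℝ) else -1) *
          (a (v p) * θ (fun j => v (Equiv.swap 0 p j.succ)))) := by ring

lemma swap2_01 {V : Type*} [AddCommGroup V] [Module ℝ V]
    (θ : V [⋀^Fin 2]→ₗ[ℝ] ℝ) (x y : V) : θ ![y, x] = -θ ![x, y] := by
  have h := θ.map_swap ![x, y] (show (0 : Fin 2) ≠ 1 by decide)
  have e : (![x, y] ∘ Equiv.swap (0 : Fin 2) 1) = ![y, x] := by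
    funext j; fin_cases j <;> norm_num [Equiv.swap_apply_def, Fin.ext_iff, Fin.isValue, show ((3:Fin 4):ℕ) = 3 from rfl, show ((2:Fin 4):ℕ) = 2 from rfl, show ((2:Fin 3):ℕ) = 2 from rfl]
  rw [e] at h; exact h

lemma swap3_01 {V : Type*} [AddCommGroup V] [Module ℝ V]
    (θ : V [⋀^Fin 3]→ₗ[ℝ] ℝ) (x y z : V) : θ ![y, x, z] = -θ ![x, y, z] := by
  have h := θ.map_swap ![x, y, z] (show (0 : Fin 3) ≠ 1 by decide)
  have e : (![x, y, z] ∘ Equiv.swap (0 : Fin 3) 1) = ![y, x, z] := by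
    funext j; fin_cases j <;> norm_num [Equiv.swap_apply_def, Fin.ext_iff, Fin.isValue, show ((3:Fin 4):ℕ) = 3 from rfl, show ((2:Fin 4):ℕ) = 2 from rfl, show ((2:Fin 3):ℕ) = 2 from rfl]
  rw [e] at h; exact h

lemma swap3_12 {V : Type*} [AddCommGroup V] [Module ℝ V]
    (θ : V [⋀^Fin 3]→ₗ[ℝ] ℝ) (x y z : V) : θ ![x, z, y] = -θ ![x, y, z] := by
  have h := θ.map_swap ![x, y, z] (show (1 : Fin 3) ≠ 2 by decide)
  have e : (![x, y, z] ∘ Equiv.swap (1 : Fin 3) 2) = ![x, z, y] := by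
    funext j; fin_cases j <;> norm_num [Equiv.swap_apply_def, Fin.ext_iff, Fin.isValue, show ((3:Fin 4):ℕ) = 3 from rfl, show ((2:Fin 4):ℕ) = 2 from rfl, show ((2:Fin 3):ℕ) = 2 from rfl, Matrix.cons_val_two, Matrix.vecHead, Matrix.vecTail]
  rw [e] at h; exact h

lemma eval3 {V : Type*} [AddCommGroup V] [Module ℝ V]
    (a : V →ₗ[ℝ] ℝ) (θ : V [⋀^Fin 2]→ₗ[ℝ] ℝ) (x y z : V) :
    wedge (oneForm a) θ ![x, y, z] =
      a x * θ ![y, z] - a y * θ ![x, z] + a z * θ ![x, y] := by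
  have h := wedge_one_apply (m := 2) a θ ![x, y, z]
  have e0 : (fun i : Fin (1+2) => (![x, y, z] : Fin 3 → V) (Fin.cast (by omega) i))
      = ![x, y, z] := rfl
  rw [e0] at h
  rw [h, Fin.sum_univ_three]
  have A0 : (fun j : Fin 2 => (![x,y,z] : Fin 3 → V) (Equiv.swap 0 (0 : Fin 3) j.succ)) = ![y, z] := by
    funext j; fin_cases j <;> norm_num [Equiv.swap_apply_def, Fin.ext_iff, Fin.isValue, show ((3:Fin 4):ℕ) = 3 from rfl, show ((2:Fin 4):ℕ) = 2 from rfl, show ((2:Fin 3):ℕ) = 2 from rfl, Matrix.cons_val_two, Matrix.vecHead, Matrix.vecTail]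
  have A1 : (fun j : Fin 2 => (![x,y,z] : Fin 3 → V) (Equiv.swap 0 (1 : Fin 3) j.succ)) = ![x, z] := by
    funext j; fin_cases j <;> norm_num [Equiv.swap_apply_def, Fin.ext_iff, Fin.isValue, show ((3:Fin 4):ℕ) = 3 from rfl, show ((2:Fin 4):ℕ) = 2 from rfl, show ((2:Fin 3):ℕ) = 2 from rfl, Matrix.cons_val_two, Matrix.vecHead, Matrix.vecTail]
  have A2 : (fun j : Fin 2 => (![x,y,z] : Fin 3 → V) (Equiv.swap 0 (2 : Fin 3) j.succ)) = ![y, x] := by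
    funext j; fin_cases j <;> norm_num [Equiv.swap_apply_def, Fin.ext_iff, Fin.isValue, show ((3:Fin 4):ℕ) = 3 from rfl, show ((2:Fin 4):ℕ) = 2 from rfl, show ((2:Fin 3):ℕ) = 2 from rfl]
  rw [A0, A1, A2, swap2_01 θ x y]
  norm_num [Fin.ext_iff, Matrix.cons_val_two, Matrix.cons_val_three, Matrix.vecHead, Matrix.vecTail]
  ring

lemma eval4 {V : Type*} [AddCommGroup V] [Module ℝ V]
    (a : V →ₗ[ℝ] ℝ) (θ : V [⋀^Fin 3]→ₗ[ℝ] ℝ) (x y z w : V) :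
    wedge (oneForm a) θ ![x, y, z, w] =
      a x * θ ![y, z, w] - a y * θ ![x, z, w] + a z * θ ![x, y, w] - a w * θ ![x, y, z] := by
  have h := wedge_one_apply (m := 3) a θ ![x, y, z, w]
  have e0 : (fun i : Fin (1+3) => (![x, y, z, w] : Fin 4 → V) (Fin.cast (by omega) i))
      = ![x, y, z, w] := rfl
  rw [e0] at h
  rw [h, Fin.sum_univ_four]
  have A0 : (fun j : Fin 3 => (![x,y,z,w] : Fin 4 → V) (Equiv.swap 0 (0 : Fin 4) j.succ)) = ![y, z, w] := by
    funext j; fin_cases j <;> norm_num [Equiv.swap_apply_def, Fin.ext_iff, Fin.isValue, show ((3:Fin 4):ℕ) = 3 from rfl, show ((2:Fin 4):ℕ) = 2 from rfl, show ((2:Fin 3):ℕ) = 2 from rfl, Matrix.cons_val_two, Matrix.vecHead, Matrix.vecTail]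
  have A1 : (fun j : Fin 3 => (![x,y,z,w] : Fin 4 → V) (Equiv.swap 0 (1 : Fin 4) j.succ)) = ![x, z, w] := by
    funext j; fin_cases j <;> norm_num [Equiv.swap_apply_def, Fin.ext_iff, Fin.isValue, show ((3:Fin 4):ℕ) = 3 from rfl, show ((2:Fin 4):ℕ) = 2 from rfl, show ((2:Fin 3):ℕ) = 2 from rfl, Matrix.cons_val_two, Matrix.vecHead, Matrix.vecTail]
  have A2 : (fun j : Fin 3 => (![x,y,z,w] : Fin 4 → V) (Equiv.swap 0 (2 : Fin 4) j.succ)) = ![y, x, w] := by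
    funext j; fin_cases j <;> norm_num [Equiv.swap_apply_def, Fin.ext_iff, Fin.isValue, show ((3:Fin 4):ℕ) = 3 from rfl, show ((2:Fin 4):ℕ) = 2 from rfl, show ((2:Fin 3):ℕ) = 2 from rfl]
  have A3 : (fun j : Fin 3 => (![x,y,z,w] : Fin 4 → V) (Equiv.swap 0 (3 : Fin 4) j.succ)) = ![y, z, x] := by
    funext j; fin_cases j <;> norm_num [Equiv.swap_apply_def, Fin.ext_iff, Fin.isValue, show ((3:Fin 4):ℕ) = 3 from rfl, show ((2:Fin 4):ℕ) = 2 from rfl, show ((2:Fin 3):ℕ) = 2 from rfl, Matrix.cons_val_two, Matrix.vecHead, Matrix.vecTail]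
  rw [A0, A1, A2, A3, swap3_01 θ x y w]
  have B : θ ![y, z, x] = θ ![x, y, z] := by
    rw [swap3_12 θ y x z, swap3_01 θ x y z]; ring
  rw [B]
  norm_num [Fin.ext_iff, show ((3:Fin 4):ℕ) = 3 from rfl, show ((2:Fin 4):ℕ) = 2 from rfl, Matrix.cons_val_two, Matrix.cons_val_three, Matrix.vecHead, Matrix.vecTail]
  ring

/-- contraction of a 2-form in the first slot, as a linear map in the second. -/
noncomputable def contr {V : Type*} [AddCommGroup V] [Module ℝ V]
    (Φ : V [⋀^Fin 2]→ₗ[ℝ] ℝ) (X : V) : V →ₗ[ℝ] ℝ where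
  toFun Z := Φ ![X, Z]
  map_add' Z Z' := by
    have h1 : ∀ t : V, (![X, t] : Fin 2 → V) = Function.update ![X, Z] 1 t := by
      intro t; funext j; fin_cases j <;> simp
    show Φ ![X, Z + Z'] = Φ ![X, Z] + Φ ![X, Z']
    rw [h1 (Z + Z'), h1 Z, h1 Z', Φ.map_update_add]
    simp [Function.update_idem]
  map_smul' c Z := by
    have h1 : ∀ t : V, (![X, t] : Fin 2 → V) = Function.update ![X, Z] 1 t := by
      intro t; funext j; fin_cases j <;> simp
    show Φ ![X, c • Z] = c • Φ ![X, Z]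
    rw [h1 (c • Z), h1 Z, Φ.map_update_smul]
    simp [Function.update_idem]


/-- Let `W` have dimension `2n+1`, `n ≥ 2`, `η ∈ W*`, `ξ ∈ W` with
`η ξ = 1`, and let `Φ` be an alternating 2-form with `Φ(ξ,·) = 0` whose restriction to
`ker η` is nondegenerate.  If `β ∈ W*` satisfies `β ξ = 0` and `β ∧ η ∧ Φ = 0`,
then `β = 0`. -/
theorem transverse_form_vanishes {W : Type*} [AddCommGroup W] [Module ℝ W]
    [FiniteDimensional ℝ W] (n : ℕ) (hn : 2 ≤ n)
    (hdim : Module.finrank ℝ W = 2 * n + 1)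
    (η : W →ₗ[ℝ] ℝ) (ξ : W) (hηξ : η ξ = 1)
    (Φ : W [⋀^Fin 2]→ₗ[ℝ] ℝ)
    (hΦξ : ∀ X : W, Φ ![ξ, X] = 0)
    (hnd : ∀ X : W, η X = 0 → X ≠ 0 → ∃ Y : W, η Y = 0 ∧ Φ ![X, Y] ≠ 0)
    (β : W →ₗ[ℝ] ℝ) (hβξ : β ξ = 0)
    (hβ : wedge (oneForm β) (wedge (oneForm η) Φ) = 0) :
    β = 0 := by
  set ω := wedge (oneForm η) Φ with hω
  have hω3 : ∀ A B : W, η A = 0 → η B = 0 → ω ![ξ, A, B] = Φ ![A, B] := by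
    intro A B hA hB
    rw [hω, eval3, hηξ, hA, hB, hΦξ A, hΦξ B]
    ring
  have key : ∀ X Y Z : W, η X = 0 → η Y = 0 → η Z = 0 →
      β X * Φ ![Y, Z] - β Y * Φ ![X, Z] + β Z * Φ ![X, Y] = 0 := by
    intro X Y Z hX hY hZ
    have h0 : wedge (oneForm β) ω ![ξ, X, Y, Z] = 0 := by
      rw [hβ]; rfl
    rw [eval4, hβξ, hω3 X Y hX hY, hω3 X Z hX hZ, hω3 Y Z hY hZ] at h0
    linarith
  have hker : ∀ X : W, η X = 0 → β X = 0 := by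
    intro X hX
    by_contra hbX
    have hXne : X ≠ 0 := by rintro rfl; simp at hbX
    -- find nonzero Y killed by η, β and Φ(X, ·)
    set f : W →ₗ[ℝ] ℝ × ℝ × ℝ := LinearMap.prod η (LinearMap.prod β (contr Φ X)) with hf
    have hrange : Module.finrank ℝ (LinearMap.range f) ≤ 3 := by
      have := Submodule.finrank_le (LinearMap.range f)
      simpa [Module.finrank_prod] using this
    have hrn := LinearMap.finrank_range_add_finrank_ker f
    rw [hdim] at hrn
    have hpos : 0 < Module.finrank ℝ (LinearMap.ker f) := by omega
    have hne : LinearMap.ker f ≠ ⊥ := by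
      intro h
      rw [h] at hpos
      simp at hpos
    obtain ⟨Y, hYmem, hYne⟩ := Submodule.exists_mem_ne_zero_of_ne_bot hne
    have hfY := (LinearMap.mem_ker).mp hYmem
    rw [hf] at hfY
    simp only [LinearMap.prod_apply, Function.prod, Prod.mk_eq_zero] at hfY
    obtain ⟨hηY, hβY, hΦXY⟩ := hfY
    have hΦXY' : Φ ![X, Y] = 0 := hΦXY
    obtain ⟨Z, hηZ, hΦYZ⟩ := hnd Y hηY hYne
    have := key X Y Z hX hηY hηZ
    rw [hβY, hΦXY'] at this
    have hβX0 : β X * Φ ![Y, Z] = 0 := by linarith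
    rcases mul_eq_zero.mp hβX0 with h | h
    · exact hbX h
    · exact hΦYZ h
  ext w
  have h1 : η (w - η w • ξ) = 0 := by simp [hηξ]
  have h2 := hker _ h1
  simp only [map_sub, map_smul, hβξ, smul_eq_mul, mul_zero, sub_zero] at h2
  simpa using h2
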